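/- Let m, n, ℓ be positive integers with ℓ ≤ m, and let X ∈ ℝ^{m×n} be a matrix with columns x_1, …, x_n ∈ ℝ^m. Let λ_1 ≥ λ_2 ≥ … ≥ λ_m ≥ 0 be the eigenvalues of the symmetric positive semidefinite matrix X Xᵀ, listed in decreasing order. Then for every matrix Q ∈ ℝ^{m×ℓ} with Qᵀ Q = I_ℓ one has ∑_{k=1}^{n} ‖x_k − Q Qᵀ x_k‖² ≥ ∑_{k=ℓ+1}^{m} λ_k, and there exists a matrix Q ∈ ℝ^{m×ℓ} with Qᵀ Q = I_ℓ (whose columns are orthonormal eigenvectors of X Xᵀ associated with its ℓ largest eigenvalues) for which equality holds; hence min_{Q : QᵀQ = I_ℓ} ∑_{k=1}^{n} ‖x_k − Q Qᵀ x_k‖² = ∑_{k=ℓ+1}^{m} λ_k. -/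

import Mathlib

open Matrix Finset in
private lemma aux_sum_filter_lt {M : Type*} [AddCommMonoid M] {m ℓ : ℕ} (hℓm : ℓ ≤ m)
    (f : Fin m → M) :
    ∑ i ∈ Finset.univ.filter (fun i : Fin m => (i : ℕ) < ℓ), f i
      = ∑ c : Fin ℓ, f (Fin.castLE hℓm c) := by
  have h : Finset.univ.filter (fun i : Fin m => (i : ℕ) < ℓ)
      = Finset.univ.map (Fin.castLEEmb hℓm) := by
    ext i
    simp only [mem_filter, mem_univ, true_and, Finset.mem_map, Fin.castLEEmb_apply]
    constructor
    · intro h; exact ⟨⟨(i : ℕ), h⟩, by simp [Fin.ext_iff]⟩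
    · rintro ⟨c, rfl⟩; simpa using c.2
  rw [h, Finset.sum_map]
  rfl

open Matrix Finset in
private lemma aux_kyfan {m ℓ : ℕ} (hℓm : ℓ ≤ m) (d s : Fin m → ℝ)
    (hd : ∀ i j : Fin m, i ≤ j → d j ≤ d i) (hd0 : ∀ i, 0 ≤ d i)
    (hs0 : ∀ i, 0 ≤ s i) (hs1 : ∀ i, s i ≤ 1) (hsum : ∑ i, s i = (ℓ : ℝ)) :
    ∑ i, d i * s i ≤ ∑ i ∈ Finset.univ.filter (fun i : Fin m => (i : ℕ) < ℓ), d i := by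
  rcases eq_or_lt_of_le hℓm with rfl | hlt
  · have : Finset.univ.filter (fun i : Fin ℓ => (i : ℕ) < ℓ) = Finset.univ := by
      ext i; simp [i.2]
    rw [this]
    exact Finset.sum_le_sum fun i _ => mul_le_of_le_one_right (hd0 i) (hs1 i)
  · set t := d ⟨ℓ, hlt⟩ with ht
    have hcard : ((Finset.univ.filter (fun i : Fin m => (i : ℕ) < ℓ)).card : ℝ) = ℓ := by
      have := aux_sum_filter_lt (M := ℝ) hℓm (fun _ => (1 : ℝ))
      simpa using this
    have hsplit := Finset.sum_filter_add_sum_filter_not Finset.univ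
      (fun i : Fin m => (i : ℕ) < ℓ) s
    rw [hsum] at hsplit
    have h1 : ∑ i ∈ Finset.univ.filter (fun i : Fin m => ¬ (i : ℕ) < ℓ), d i * s i
        ≤ t * ∑ i ∈ Finset.univ.filter (fun i : Fin m => ¬ (i : ℕ) < ℓ), s i := by
      rw [Finset.mul_sum]
      refine Finset.sum_le_sum fun i hi => ?_
      have hi' : ℓ ≤ (i : ℕ) := by simpa using (Finset.mem_filter.1 hi).2
      exact mul_le_mul_of_nonneg_right (hd ⟨ℓ, hlt⟩ i (by simpa [Fin.le_def] using hi')) (hs0 i)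
    have h2 : t * ∑ i ∈ Finset.univ.filter (fun i : Fin m => (i : ℕ) < ℓ), (1 - s i)
        ≤ ∑ i ∈ Finset.univ.filter (fun i : Fin m => (i : ℕ) < ℓ), d i * (1 - s i) := by
      rw [Finset.mul_sum]
      refine Finset.sum_le_sum fun i hi => ?_
      have hi' : (i : ℕ) < ℓ := by simpa using (Finset.mem_filter.1 hi).2
      exact mul_le_mul_of_nonneg_right (hd i ⟨ℓ, hlt⟩ (by simpa [Fin.le_def] using hi'.le))
        (by linarith [hs1 i])
    have heq : ∑ i ∈ Finset.univ.filter (fun i : Fin m => (i : ℕ) < ℓ), (1 - s i)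
        = ∑ i ∈ Finset.univ.filter (fun i : Fin m => ¬ (i : ℕ) < ℓ), s i := by
      rw [Finset.sum_sub_distrib, Finset.sum_const, nsmul_eq_mul, mul_one]
      rw [hcard]; linarith
    have hobj := Finset.sum_filter_add_sum_filter_not Finset.univ
      (fun i : Fin m => (i : ℕ) < ℓ) (fun i => d i * s i)
    have ht0 : 0 ≤ t := hd0 _
    have hexp : ∑ i ∈ Finset.univ.filter (fun i : Fin m => (i : ℕ) < ℓ), d i * (1 - s i)
        = ∑ i ∈ Finset.univ.filter (fun i : Fin m => (i : ℕ) < ℓ), d i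
          - ∑ i ∈ Finset.univ.filter (fun i : Fin m => (i : ℕ) < ℓ), d i * s i := by
      rw [← Finset.sum_sub_distrib]; congr 1; ext i; ring
    rw [heq] at h2
    rw [hexp] at h2
    linarith

open Matrix Finset in
private lemma aux_obj {m n ℓ : ℕ} (X : Matrix (Fin m) (Fin n) ℝ) (Q : Matrix (Fin m) (Fin ℓ) ℝ)
    (hQ : Q.transpose * Q = 1) :
    ∑ k : Fin n, ∑ i : Fin m, (X i k - (Q * Q.transpose * X) i k) ^ 2
      = Matrix.trace (X * X.transpose)
        - Matrix.trace (Q.transpose * (X * X.transpose) * Q) := by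
  set P := Q * Q.transpose with hP
  set R := X - P * X with hR
  have hL : ∑ k : Fin n, ∑ i : Fin m, (X i k - (P * X) i k) ^ 2
      = Matrix.trace (R * R.transpose) := by
    calc ∑ k : Fin n, ∑ i : Fin m, (X i k - (P * X) i k) ^ 2
        = ∑ k : Fin n, ∑ i : Fin m, (R i k) ^ 2 := by
          simp [hR, Matrix.sub_apply]
      _ = ∑ i : Fin m, ∑ k : Fin n, (R i k) ^ 2 := Finset.sum_comm
      _ = Matrix.trace (R * R.transpose) := by
          simp [Matrix.trace, Matrix.diag, Matrix.mul_apply, sq]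
  rw [hL]
  have hPT : P.transpose = P := by
    rw [hP, Matrix.transpose_mul, Matrix.transpose_transpose]
  have hPP : P * P = P := by
    rw [hP, Matrix.mul_assoc, ← Matrix.mul_assoc Q.transpose, hQ, Matrix.one_mul]
  have hRR : R * R.transpose
      = X * X.transpose - (X * X.transpose) * P - P * (X * X.transpose)
        + P * (X * X.transpose) * P := by
    rw [hR, Matrix.transpose_sub, Matrix.transpose_mul, hPT]
    simp only [Matrix.sub_mul, Matrix.mul_sub, Matrix.mul_assoc]
    abel
  rw [hRR]
  rw [Matrix.trace_add, Matrix.trace_sub, Matrix.trace_sub]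
  have h1 : Matrix.trace (P * (X * X.transpose) * P) = Matrix.trace (P * (X * X.transpose)) := by
    rw [Matrix.trace_mul_cycle, ← Matrix.mul_assoc, hPP, Matrix.mul_assoc]
  have h2 : Matrix.trace ((X * X.transpose) * P) = Matrix.trace (P * (X * X.transpose)) :=
    Matrix.trace_mul_comm _ _
  have h3 : Matrix.trace (Q.transpose * (X * X.transpose) * Q)
      = Matrix.trace (P * (X * X.transpose)) := by
    rw [Matrix.trace_mul_cycle, ← Matrix.mul_assoc]
  rw [h1, h2, h3]; ring

open Matrix Finset in
private lemma aux_trace_conj {m ℓ : ℕ} (E : Fin m → ℝ) (B : Matrix (Fin m) (Fin ℓ) ℝ) :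
    Matrix.trace (B.transpose * Matrix.diagonal E * B)
      = ∑ j, E j * ∑ c, (B j c) ^ 2 := by
  rw [Matrix.trace_mul_cycle]
  simp only [Matrix.trace, Matrix.diag_apply, Matrix.mul_diagonal, Matrix.mul_apply,
    Matrix.transpose_apply, sq]
  refine Finset.sum_congr rfl fun j _ => ?_
  rw [Finset.sum_eq_single j]
  · rw [Matrix.diagonal_apply_eq]; ring
  · intro b _ hb; rw [Matrix.diagonal_apply_ne _ hb, mul_zero]
  · intro h; exact absurd (Finset.mem_univ j) h

open Matrix Finset in
private lemma aux_diag_le_one {m ℓ : ℕ} (B : Matrix (Fin m) (Fin ℓ) ℝ)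
    (hB : B.transpose * B = 1) (j : Fin m) :
    (B * B.transpose) j j ≤ 1 := by
  set G := B * B.transpose with hG
  have hGT : G.transpose = G := by rw [hG, Matrix.transpose_mul, Matrix.transpose_transpose]
  have hGG : G * G = G := by
    rw [hG, Matrix.mul_assoc, ← Matrix.mul_assoc B.transpose, hB, Matrix.one_mul]
  have h1 : G j j = ∑ p, (G j p) ^ 2 := by
    conv_lhs => rw [← hGG]
    rw [Matrix.mul_apply]
    refine Finset.sum_congr rfl fun p _ => ?_
    have hsym : G p j = G j p := by
      rw [← congrFun (congrFun hGT p) j]; rfl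
    rw [hsym, sq]
  have h2 : (G j j) ^ 2 ≤ G j j :=
    calc (G j j) ^ 2 ≤ ∑ p, (G j p) ^ 2 :=
          Finset.single_le_sum (f := fun p => (G j p) ^ 2) (fun p _ => sq_nonneg _)
            (Finset.mem_univ j)
      _ = G j j := h1.symm
  nlinarith [sq_nonneg (G j j)]

open Matrix Finset in
private lemma aux_trace_proj {m ℓ : ℕ} (B : Matrix (Fin m) (Fin ℓ) ℝ)
    (hB : B.transpose * B = 1) :
    ∑ j, (B * B.transpose) j j = (ℓ : ℝ) := by
  have : Matrix.trace (B * B.transpose) = Matrix.trace (B.transpose * B) :=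
    Matrix.trace_mul_comm _ _
  rw [hB] at this
  simpa [Matrix.trace, Matrix.diag] using this

open Matrix Finset in
theorem stmt_9 (m n ℓ : ℕ) (hm : 0 < m) (hn : 0 < n) (hℓ : 0 < ℓ) (hℓm : ℓ ≤ m)
    (X : Matrix (Fin m) (Fin n) ℝ)
    (hA : (X * X.transpose).IsHermitian)
    (lam : Fin m → ℝ)
    (hdec : ∀ i j : Fin m, i ≤ j → lam j ≤ lam i)
    (hnonneg : ∀ i : Fin m, 0 ≤ lam i)
    (heig : ∃ σ : Equiv.Perm (Fin m), ∀ i : Fin m, lam i = hA.eigenvalues (σ i)) :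
    (∀ Q : Matrix (Fin m) (Fin ℓ) ℝ, Q.transpose * Q = 1 →
        ∑ k ∈ Finset.univ.filter (fun k : Fin m => ℓ ≤ (k : ℕ)), lam k ≤
          ∑ k : Fin n, ∑ i : Fin m, (X i k - (Q * Q.transpose * X) i k) ^ 2) ∧
      ∃ Q : Matrix (Fin m) (Fin ℓ) ℝ, Q.transpose * Q = 1 ∧
        (∀ c : Fin ℓ, (X * X.transpose).mulVec (fun i => Q i c) =
          lam (Fin.castLE hℓm c) • (fun i => Q i c)) ∧
        ∑ k : Fin n, ∑ i : Fin m, (X i k - (Q * Q.transpose * X) i k) ^ 2 =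
          ∑ k ∈ Finset.univ.filter (fun k : Fin m => ℓ ≤ (k : ℕ)), lam k := by
  obtain ⟨σ, hσ⟩ := heig
  set A := X * X.transpose with hAdef
  set U := (hA.eigenvectorUnitary : Matrix (Fin m) (Fin m) ℝ) with hUdef
  have hUtU : U.transpose * U = 1 := by
    have h2 := Matrix.mem_unitaryGroup_iff'.mp (hA.eigenvectorUnitary).2
    rwa [Matrix.star_eq_conjTranspose, Matrix.conjTranspose_eq_transpose_of_trivial] at h2
  have hUUt : U * U.transpose = 1 := by
    have h2 := Matrix.mem_unitaryGroup_iff.mp (hA.eigenvectorUnitary).2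
    rwa [Matrix.star_eq_conjTranspose, Matrix.conjTranspose_eq_transpose_of_trivial] at h2
  have hspec : A = U * Matrix.diagonal hA.eigenvalues * U.transpose := by
    have := hA.spectral_theorem
    simpa [Matrix.star_eq_conjTranspose, Matrix.conjTranspose_eq_transpose_of_trivial,
      Function.comp] using this
  have htraceA : Matrix.trace A = ∑ j, hA.eigenvalues j := by
    conv_lhs => rw [hspec]
    rw [Matrix.trace_mul_cycle, hUtU, Matrix.one_mul, Matrix.trace_diagonal]
  have hsumlam : ∑ i, lam i = Matrix.trace A := by
    rw [htraceA]
    rw [show (∑ i, lam i) = ∑ i, hA.eigenvalues (σ i) from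
      Finset.sum_congr rfl fun i _ => hσ i]
    exact Equiv.sum_comp σ hA.eigenvalues
  have hfilt : Finset.univ.filter (fun k : Fin m => ℓ ≤ (k : ℕ))
      = Finset.univ.filter (fun k : Fin m => ¬ (k : ℕ) < ℓ) := by
    ext i; simp [not_lt]
  have hsplitlam := Finset.sum_filter_add_sum_filter_not Finset.univ
    (fun i : Fin m => (i : ℕ) < ℓ) lam
  -- the master trace formula
  have hg : ∀ Q : Matrix (Fin m) (Fin ℓ) ℝ, Q.transpose * Q = 1 →
      Matrix.trace (Q.transpose * A * Q)
        = ∑ i, lam i * ∑ c, ((U.transpose * Q) (σ i) c) ^ 2 := by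
    intro Q hQ
    have hconj : Q.transpose * A * Q
        = (U.transpose * Q).transpose * Matrix.diagonal hA.eigenvalues * (U.transpose * Q) := by
      conv_lhs => rw [hspec]
      simp only [Matrix.transpose_mul, Matrix.transpose_transpose, Matrix.mul_assoc]
    rw [hconj, aux_trace_conj]
    rw [← Equiv.sum_comp σ (fun j => hA.eigenvalues j * ∑ c, ((U.transpose * Q) j c) ^ 2)]
    exact Finset.sum_congr rfl fun i _ => by rw [hσ i]
  -- B-properties
  have hBB : ∀ Q : Matrix (Fin m) (Fin ℓ) ℝ, Q.transpose * Q = 1 →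
      (U.transpose * Q).transpose * (U.transpose * Q) = 1 := by
    intro Q hQ
    rw [Matrix.transpose_mul, Matrix.transpose_transpose, Matrix.mul_assoc,
      ← Matrix.mul_assoc U, hUUt, Matrix.one_mul, hQ]
  have hdiag : ∀ (B : Matrix (Fin m) (Fin ℓ) ℝ) (j : Fin m),
      (B * B.transpose) j j = ∑ c, (B j c) ^ 2 := by
    intro B j
    rw [Matrix.mul_apply]
    exact Finset.sum_congr rfl fun c _ => by rw [Matrix.transpose_apply, sq]
  constructor
  · -- lower bound
    intro Q hQ
    set B := U.transpose * Q with hBdef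
    have hB1 : B.transpose * B = 1 := hBB Q hQ
    set s : Fin m → ℝ := fun i => ∑ c, (B (σ i) c) ^ 2 with hs
    have hs0 : ∀ i, 0 ≤ s i := fun i => Finset.sum_nonneg fun c _ => sq_nonneg _
    have hs1 : ∀ i, s i ≤ 1 := by
      intro i
      have := aux_diag_le_one B hB1 (σ i)
      rwa [hdiag B (σ i)] at this
    have hsum : ∑ i, s i = (ℓ : ℝ) := by
      have h1 : ∑ j, (B * B.transpose) j j = (ℓ : ℝ) := aux_trace_proj B hB1
      rw [← Equiv.sum_comp σ (fun j => (B * B.transpose) j j)] at h1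
      rw [← h1]
      exact Finset.sum_congr rfl fun i _ => (hdiag B (σ i)).symm
    have hkf := aux_kyfan hℓm lam s hdec hnonneg hs0 hs1 hsum
    have htr := hg Q hQ
    rw [aux_obj X Q hQ, ← hAdef, htr, hfilt]
    have : ∑ i, lam i * s i
        ≤ ∑ i ∈ Finset.univ.filter (fun i : Fin m => (i : ℕ) < ℓ), lam i := hkf
    linarith [hsumlam, hsplitlam, this]
  · -- the optimal Q
    set Q : Matrix (Fin m) (Fin ℓ) ℝ :=
      Matrix.of (fun i c => U i (σ (Fin.castLE hℓm c))) with hQdef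
    have hinj : Function.Injective (fun c : Fin ℓ => σ (Fin.castLE hℓm c)) := by
      intro a b hab
      exact Fin.castLE_injective hℓm (σ.injective hab)
    have hQ : Q.transpose * Q = 1 := by
      ext c c'
      rw [Matrix.mul_apply]
      have h := congrFun (congrFun hUtU (σ (Fin.castLE hℓm c))) (σ (Fin.castLE hℓm c'))
      rw [Matrix.mul_apply] at h
      simp only [Matrix.transpose_apply] at h ⊢
      rw [show (∑ i, Q i c * Q i c')
          = ∑ i, U i (σ (Fin.castLE hℓm c)) * U i (σ (Fin.castLE hℓm c')) from rfl, h]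
      rw [Matrix.one_apply, Matrix.one_apply]
      congr 1
      simp only [eq_iff_iff]
      exact ⟨fun h' => Fin.castLE_injective hℓm (σ.injective h'), fun h' => by rw [h']⟩
    refine ⟨Q, hQ, ?_, ?_⟩
    · -- eigenvector property
      intro c
      have hcol : (fun i => Q i c) = ⇑(hA.eigenvectorBasis (σ (Fin.castLE hℓm c))) := by
        funext i
        exact hA.eigenvectorUnitary_apply i (σ (Fin.castLE hℓm c))
      rw [hcol, hA.mulVec_eigenvectorBasis, hσ (Fin.castLE hℓm c)]
    · -- equality
      have hB : U.transpose * Q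
          = Matrix.of (fun j c => (1 : Matrix (Fin m) (Fin m) ℝ) j (σ (Fin.castLE hℓm c))) := by
        ext j c
        rw [Matrix.of_apply, ← hUtU, Matrix.mul_apply, Matrix.mul_apply]
        exact Finset.sum_congr rfl fun p _ => rfl
      have hs : ∀ i, (∑ c, ((U.transpose * Q) (σ i) c) ^ 2)
          = if (i : ℕ) < ℓ then 1 else 0 := by
        intro i
        rw [hB]
        simp only [Matrix.of_apply, Matrix.one_apply]
        by_cases h : (i : ℕ) < ℓ
        · rw [if_pos h]
          rw [Finset.sum_eq_single (⟨(i : ℕ), h⟩ : Fin ℓ)]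
          · have h' : σ i = σ (Fin.castLE hℓm ⟨(i : ℕ), h⟩) := congrArg σ (Fin.ext rfl)
            rw [if_pos h', one_pow]
          · intro b _ hb
            have h' : ¬ σ i = σ (Fin.castLE hℓm b) := by
              intro hEq
              apply hb
              have h2 := σ.injective hEq
              have h3 : (i : ℕ) = (b : ℕ) := congrArg Fin.val h2
              exact Fin.ext h3.symm
            rw [if_neg h', zero_pow two_ne_zero]
          · intro h'; exact absurd (Finset.mem_univ _) h'
        · rw [if_neg h]
          refine Finset.sum_eq_zero fun c _ => ?_
          have h' : ¬ σ i = σ (Fin.castLE hℓm c) := by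
            intro hEq
            apply h
            have h2 := σ.injective hEq
            have hval : (i : ℕ) = ((Fin.castLE hℓm c : Fin m) : ℕ) := congrArg Fin.val h2
            rw [hval]
            exact c.2
          rw [if_neg h', zero_pow two_ne_zero]
      have htr := hg Q hQ
      have htrval : Matrix.trace (Q.transpose * A * Q)
          = ∑ i ∈ Finset.univ.filter (fun i : Fin m => (i : ℕ) < ℓ), lam i := by
        rw [htr]
        rw [show (∑ i, lam i * ∑ c, ((U.transpose * Q) (σ i) c) ^ 2)
            = ∑ i : Fin m, (if (i : ℕ) < ℓ then lam i else 0) from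
          Finset.sum_congr rfl fun i _ => by rw [hs i]; split <;> ring]
        rw [← Finset.sum_filter]
      rw [aux_obj X Q hQ, ← hAdef, htrval, hfilt]
      linarith [hsumlam, hsplitlam]
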